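/- Let K be a field, n ≥ 2 an integer, and let q, z_1, …, z_n ∈ K be nonzero elements such that z_1, …, z_{n−1} are pairwise distinct, q²z_i ≠ z_j for all i, j ∈ {1,…,n}, and z_i + q·z_j ≠ 0 for all i, j ∈ {1,…,n}. Then for every k ∈ {1,…,n−1} one has λ_k(z_1,…,z_{n−1};z_n) = 1/(1+q·z_n/z_k) − ∑_{i=1}^{n−1} ρ_i(z_1,…,z_{n−1};z_n) · 1/(1+q·z_i/z_k). -/

import Mathlib

open Finset

/-- Evaluated form of Lagrange interpolation: a polynomial of degree `< #s` evaluated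
at any point `t` equals the Lagrange interpolation formula. -/
lemma lagrange_eval_sum {K : Type*} [Field K] {ι : Type*} [DecidableEq ι]
    (s : Finset ι) (v : ι → K) (hvs : Set.InjOn v s) (f : Polynomial K)
    (hdeg : f.degree < s.card) (t : K) :
    f.eval t = ∑ j ∈ s, f.eval (v j) * ∏ l ∈ s.erase j, (t - v l) / (v j - v l) := by
  conv_lhs => rw [Lagrange.eq_interpolate hvs hdeg]
  rw [Lagrange.interpolate_apply, Polynomial.eval_finset_sum]
  refine Finset.sum_congr rfl fun j hj => ?_
  rw [Polynomial.eval_mul, Polynomial.eval_C, Lagrange.basis, Polynomial.eval_prod]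
  congr 1
  refine Finset.prod_congr rfl fun l hl => ?_
  rw [Lagrange.basisDivisor, Polynomial.eval_mul, Polynomial.eval_C, Polynomial.eval_sub,
    Polynomial.eval_X, Polynomial.eval_C, div_eq_inv_mul]

/-- Khoroshkin–Shapiro, Proposition 6(b), equation (la1): the coefficient function
`λ_k(z_1,…,z_{n-1};z_n)` equals `1/(1+q z_n/z_k) - ∑_i ρ_i · 1/(1+q z_i/z_k)`. -/
theorem weight_function_lambda_identity
    (K : Type*) [Field K] (n : ℕ) (hn : 2 ≤ n) (q : K) (z : ℕ → K)
    (hq : q ≠ 0) (hz : ∀ i ∈ Icc 1 n, z i ≠ 0)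
    (hdist : ∀ i ∈ Icc 1 (n - 1), ∀ j ∈ Icc 1 (n - 1), i ≠ j → z i ≠ z j)
    (hq2 : ∀ i ∈ Icc 1 n, ∀ j ∈ Icc 1 n, q ^ 2 * z i ≠ z j)
    (hq1 : ∀ i ∈ Icc 1 n, ∀ j ∈ Icc 1 n, z i + q * z j ≠ 0) :
    ∀ k ∈ Icc 1 (n - 1),
      z k / (q * z n + z k) *
        ∏ i ∈ Icc 1 (n - 1),
          ((z n - z i) * (z k + q ^ 3 * z i)) / ((z k + q * z i) * (z n - q ^ 2 * z i))
      = 1 / (1 + q * z n / z k)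
        - ∑ i ∈ Icc 1 (n - 1),
            ((∏ m ∈ (Icc 1 (n - 1)).erase i, (z n - z m) / (z i - z m)) *
              ∏ m ∈ Icc 1 (n - 1), (z i - q ^ 2 * z m) / (z n - q ^ 2 * z m)) *
            (1 / (1 + q * z i / z k)) := by
  intro k hk
  set A : Finset ℕ := Icc 1 (n - 1) with hA
  have hAsub : ∀ i ∈ A, i ∈ Icc 1 n := by
    intro i hi
    rw [hA, mem_Icc] at hi
    exact mem_Icc.mpr ⟨hi.1, le_trans hi.2 (Nat.sub_le n 1)⟩
  have hnmem : n ∈ Icc 1 n := mem_Icc.mpr ⟨le_trans one_le_two hn, le_refl n⟩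
  have hk' : k ∈ Icc 1 n := hAsub k hk
  have hne0 : ∀ i ∈ A, i ≠ 0 := by
    intro i hi h
    rw [hA, mem_Icc] at hi
    omega
  have h0A : (0 : ℕ) ∉ A := fun h => hne0 0 h rfl
  have hzk : z k ≠ 0 := hz k hk'
  have hzkn : z k + q * z n ≠ 0 := hq1 k hk' n hnmem
  have hzki : ∀ i ∈ A, z k + q * z i ≠ 0 := fun i hi => hq1 k hk' i (hAsub i hi)
  have hnq2 : ∀ m ∈ A, z n - q ^ 2 * z m ≠ 0 := fun m hm =>
    sub_ne_zero.mpr (Ne.symm (hq2 m (hAsub m hm) n hnmem))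
  -- the extra node
  set w : K := -z k / q with hw
  have hwsub : ∀ m ∈ A, w - z m = -(z k + q * z m) / q := by
    intro m hm; rw [hw]; field_simp; ring
  have hwq3 : ∀ m ∈ A, w - q ^ 2 * z m = -(z k + q ^ 3 * z m) / q := by
    intro m hm; rw [hw]; field_simp; ring
  have hwnsub : z n - w = (z k + q * z n) / q := by rw [hw]; field_simp; ring
  have hwisub : ∀ i ∈ A, z i - w = (z k + q * z i) / q := by
    intro i hi; rw [hw]; field_simp; ring
  have hwne : ∀ m ∈ A, w - z m ≠ 0 := by
    intro m hm
    rw [hwsub m hm]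
    exact div_ne_zero (neg_ne_zero.mpr (hzki m hm)) hq
  have hiw : ∀ i ∈ A, z i - w ≠ 0 := by
    intro i hi
    rw [hwisub i hi]
    exact div_ne_zero (hzki i hi) hq
  set v : ℕ → K := fun i => if i = 0 then w else z i with hv
  set s : Finset ℕ := insert 0 A with hs
  have hv0 : v 0 = w := rfl
  have hvA : ∀ i ∈ A, v i = z i := fun i hi => if_neg (hne0 i hi)
  have hinj : Set.InjOn v ↑s := by
    intro a ha b hb hab
    rw [hs] at ha hb
    simp only [coe_insert, Set.mem_insert_iff, mem_coe] at ha hb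
    rcases ha with rfl | ha <;> rcases hb with rfl | hb
    · rfl
    · exfalso
      apply sub_ne_zero.mp (hwne b hb)
      rw [← hv0, ← hvA b hb, hab]
    · exfalso
      apply sub_ne_zero.mp (hwne a ha)
      rw [← hv0, ← hvA a ha, hab]
    · by_contra hne
      exact hdist a ha b hb hne (by rw [← hvA a ha, ← hvA b hb, hab])
  set f : Polynomial K := ∏ m ∈ A, (Polynomial.X - Polynomial.C (q ^ 2 * z m)) with hf
  have hfne : f ≠ 0 := by
    rw [hf]; exact prod_ne_zero_iff.mpr fun m _ => Polynomial.X_sub_C_ne_zero _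
  have hnat : f.natDegree = A.card := by
    rw [hf, Polynomial.natDegree_prod _ _ fun m _ => Polynomial.X_sub_C_ne_zero _]
    rw [Finset.sum_congr rfl fun m _ => Polynomial.natDegree_X_sub_C (q ^ 2 * z m)]
    simp
  have hdeg : f.degree < s.card := by
    rw [Polynomial.degree_eq_natDegree hfne, hnat, hs, card_insert_of_notMem h0A]
    exact_mod_cast Nat.lt_succ_self A.card
  have hfeval : ∀ t : K, f.eval t = ∏ m ∈ A, (t - q ^ 2 * z m) := by
    intro t
    rw [hf, Polynomial.eval_prod]
    exact Finset.prod_congr rfl fun m hm => by simp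
  have hDne : (∏ m ∈ A, (z n - q ^ 2 * z m)) ≠ 0 := prod_ne_zero_iff.mpr hnq2
  -- the interpolation identity
  have interp : (∏ m ∈ A, (z n - q ^ 2 * z m))
      = f.eval (v 0) * ∏ l ∈ s.erase 0, (z n - v l) / (v 0 - v l)
      + ∑ i ∈ A, f.eval (v i) * ∏ l ∈ s.erase i, (z n - v l) / (v i - v l) := by
    rw [← hfeval (z n), lagrange_eval_sum s v hinj f hdeg (z n), hs,
      Finset.sum_insert h0A]
  -- rewrite 1/(1 + q c / z k) = z k / (z k + q c)
  have hT : ∀ c : K, 1 / (1 + q * c / z k) = z k / (z k + q * c) := by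
    intro c
    rw [show (1 + q * c / z k) = (z k + q * c) / z k by field_simp, one_div_div]
  -- claim 1: summand identification
  have claim1 : ∀ i ∈ A,
      ((∏ m ∈ A.erase i, (z n - z m) / (z i - z m)) *
        ∏ m ∈ A, (z i - q ^ 2 * z m) / (z n - q ^ 2 * z m)) * (1 / (1 + q * z i / z k))
      = z k / (z k + q * z n) / (∏ m ∈ A, (z n - q ^ 2 * z m)) *
        (f.eval (v i) * ∏ l ∈ s.erase i, (z n - v l) / (v i - v l)) := by
    intro i hi
    have hi0 : i ≠ 0 := hne0 i hi
    have hiA0 : (0 : ℕ) ∉ A.erase i := fun h => h0A (mem_of_mem_erase h)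
    rw [hT, hvA i hi, hs, Finset.erase_insert_of_ne (Ne.symm hi0), Finset.prod_insert hiA0,
      hv0]
    have hprodv : ∏ l ∈ A.erase i, (z n - v l) / (z i - v l)
        = ∏ l ∈ A.erase i, (z n - z l) / (z i - z l) :=
      Finset.prod_congr rfl fun l hl => by rw [hvA l (mem_of_mem_erase hl)]
    rw [hprodv, hfeval (z i), hwnsub, hwisub i hi]
    simp only [Finset.prod_div_distrib]
    have hPine : (∏ m ∈ A.erase i, (z i - z m)) ≠ 0 := prod_ne_zero_iff.mpr fun m hm =>
      sub_ne_zero.mpr (hdist i hi m (mem_of_mem_erase hm) (Ne.symm (ne_of_mem_erase hm)))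
    field_simp [hq, hzkn, hzki i hi, hPine, hDne]
    have h2 : z k + z n * q ≠ 0 := by
      rw [show z k + z n * q = z k + q * z n by ring]; exact hzkn
    rw [mul_div_mul_right _ _ h2]
  -- claim 2: LHS identification
  have claim2 :
      z k / (q * z n + z k) *
        ∏ i ∈ A, ((z n - z i) * (z k + q ^ 3 * z i)) / ((z k + q * z i) * (z n - q ^ 2 * z i))
      = z k / (z k + q * z n) / (∏ m ∈ A, (z n - q ^ 2 * z m)) *
        (f.eval (v 0) * ∏ l ∈ s.erase 0, (z n - v l) / (v 0 - v l)) := by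
    rw [hs, Finset.erase_insert h0A, hv0, hfeval w]
    have hprodv : ∏ l ∈ A, (z n - v l) / (w - v l) = ∏ l ∈ A, (z n - z l) / (w - z l) :=
      Finset.prod_congr rfl fun l hl => by rw [hvA l hl]
    rw [hprodv, ← Finset.prod_mul_distrib]
    have hfac : ∀ m ∈ A,
        ((z n - z m) * (z k + q ^ 3 * z m)) / ((z k + q * z m) * (z n - q ^ 2 * z m))
        = ((w - q ^ 2 * z m) * ((z n - z m) / (w - z m))) / (z n - q ^ 2 * z m) := by
      intro m hm
      rw [← mul_div_assoc, div_div,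
        div_eq_div_iff (mul_ne_zero (hzki m hm) (hnq2 m hm))
          (mul_ne_zero (hwne m hm) (hnq2 m hm)), hwq3 m hm, hwsub m hm]
      ring
    rw [Finset.prod_congr rfl hfac, Finset.prod_div_distrib]
    ring
  rw [hT, claim2, Finset.sum_congr rfl claim1, ← Finset.mul_sum,
    eq_sub_iff_add_eq, ← mul_add, ← interp]
  exact div_mul_cancel₀ _ hDne
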